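/- Let μ, μ′ be Borel probability measures on a metric space Y, and (ζ_n) nested countable partitions that are nicely shrinking with respect to μ. If μ is not absolutely continuous with respect to μ′, then the Kullback–Leibler divergences D_{ζ_n}(μ ∥ μ′) = ∑_{A ∈ ζ_n} −μ(A) log(μ′(A)/μ(A)) tend to infinity as n → ∞. -/

import Mathlib

open MeasureTheory Filter
open scoped ENNReal

open scoped Classical in
/-- The Kullback–Leibler divergence `∑ᵢ −pᵢ log(qᵢ/pᵢ) = ∑ᵢ pᵢ log(pᵢ/qᵢ)` of two
countable nonnegative families, valued in `EReal = [−∞, ∞]`, with the conventions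
`log 0 = −∞` and `0·log(0/0) = 0·log ∞ = 0`: it equals `⊤` if some index carries
`pᵢ > 0 = qᵢ`, or if the (conventional) series fails to converge. -/
noncomputable def klDiv {ι : Type*} (p q : ι → ℝ) : EReal :=
  if (∀ i, q i = 0 → p i = 0) ∧ Summable (fun i => p i * Real.log (p i / q i)) then
    (((∑' i, p i * Real.log (p i / q i) : ℝ) : EReal))
  else ⊤


theorem key_ineq {p q : ℝ} (hp : 0 ≤ p) (hq : 0 ≤ q) (h : q = 0 → p = 0) :
    p - q ≤ p * Real.log (p / q) := by
  rcases eq_or_lt_of_le hp with h0 | h0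
  · rw [← h0]; simp; linarith
  · rcases eq_or_lt_of_le hq with hq0 | hq0
    · exact absurd (h hq0.symm) (ne_of_gt h0)
    · have hx : Real.log (q / p) ≤ q / p - 1 := Real.log_le_sub_one_of_pos (by positivity)
      have hlog : Real.log (p / q) = Real.log p - Real.log q :=
        Real.log_div (ne_of_gt h0) (ne_of_gt hq0)
      have hlog2 : Real.log (q / p) = Real.log q - Real.log p :=
        Real.log_div (ne_of_gt hq0) (ne_of_gt h0)
      rw [hlog]
      rw [hlog2] at hx
      have := mul_le_mul_of_nonneg_left hx (le_of_lt h0)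
      rw [mul_sub] at this
      have hqp : p * (q / p) = q := by field_simp
      nlinarith

theorem log_sum {α : Type*} (p q : α → ℝ) (hp : ∀ i, 0 ≤ p i) (hq : ∀ i, 0 ≤ q i)
    (hcond : ∀ i, q i = 0 → p i = 0) {P Q : ℝ} (hP : HasSum p P) (hQ : HasSum q Q)
    (hf : Summable (fun i => p i * Real.log (p i / q i))) :
    P * Real.log (P / Q) ≤ ∑' i, p i * Real.log (p i / q i) := by
  have hPnn : 0 ≤ P := by rw [← hP.tsum_eq]; exact tsum_nonneg hp
  have hQnn : 0 ≤ Q := by rw [← hQ.tsum_eq]; exact tsum_nonneg hq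
  rcases eq_or_lt_of_le hPnn with hP0 | hP0
  · have hp0 : ∀ i, p i = 0 := by
      intro i
      have h1 := le_hasSum hP i fun j _ => hp j
      exact le_antisymm (hP0 ▸ h1) (hp i)
    rw [← hP0, zero_mul]
    exact tsum_nonneg fun i => by rw [hp0 i, zero_mul]
  · have hQ0 : 0 < Q := by
      rcases eq_or_lt_of_le hQnn with h | h
      · exfalso
        have hq0 : ∀ i, q i = 0 := by
          intro i
          have h1 := le_hasSum hQ i fun j _ => hq j
          exact le_antisymm (h ▸ h1) (hq i)
        have hp0 : ∀ i, p i = 0 := fun i => hcond i (hq0 i)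
        have : HasSum p 0 := by
          convert (hasSum_zero : HasSum (fun _ : α => (0:ℝ)) 0) with i
          exact hp0 i
        exact absurd (hP.unique this) (ne_of_gt hP0)
      · exact h
    set c := P / Q with hc
    have hcpos : 0 < c := div_pos hP0 hQ0
    have hpt : ∀ i, p i * Real.log c + (p i - c * q i) ≤ p i * Real.log (p i / q i) := by
      intro i
      rcases eq_or_lt_of_le (hp i) with h0 | h0
      · rw [← h0]
        simp only [zero_mul, zero_add, zero_sub]
        nlinarith [hq i, hcpos.le]
      · have hqi : 0 < q i :=
          lt_of_le_of_ne (hq i) (fun h => (ne_of_gt h0) (hcond i h.symm))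
        have hcq : 0 < c * q i := mul_pos hcpos hqi
        have key := key_ineq (hp i) hcq.le (fun h => absurd h (ne_of_gt hcq))
        have hrw : p i / (c * q i) = (p i / q i) / c := by rw [div_div, mul_comm]
        rw [hrw, Real.log_div (ne_of_gt (div_pos h0 hqi)) (ne_of_gt hcpos), mul_sub] at key
        linarith
    have hrsum : Summable (fun i => p i * Real.log c + (p i - c * q i)) :=
      (hP.summable.mul_right _).add (hP.summable.sub (hQ.summable.mul_left c))
    have hle := Summable.tsum_le_tsum hpt hrsum hf
    have hval : HasSum (fun i => p i * Real.log c + (p i - c * q i))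
        (P * Real.log c + (P - c * Q)) :=
      (hP.mul_right _).add (hP.sub (hQ.mul_left c))
    rw [hval.tsum_eq] at hle
    have hcQ : c * Q = P := by rw [hc]; field_simp
    rw [hcQ] at hle
    simpa using hle

theorem klDiv_le_klDiv {ι κ : Type*} (φ : ι → κ) (p q : ι → ℝ)
    (hp : ∀ i, 0 ≤ p i) (hq : ∀ i, 0 ≤ q i) (hsp : Summable p) (hsq : Summable q)
    (P Q : κ → ℝ)
    (hP : ∀ j, HasSum (fun i : {i // φ i = j} => p i.1) (P j))
    (hQ : ∀ j, HasSum (fun i : {i // φ i = j} => q i.1) (Q j)) :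
    klDiv P Q ≤ klDiv p q := by
  by_cases hfin : (∀ i, q i = 0 → p i = 0) ∧ Summable (fun i => p i * Real.log (p i / q i))
  swap
  · simp only [klDiv]; rw [if_neg hfin]; exact le_top
  obtain ⟨hcond, hsum⟩ := hfin
  have hPnn : ∀ j, 0 ≤ P j := fun j => by
    rw [← (hP j).tsum_eq]; exact tsum_nonneg fun i => hp i.1
  have hQnn : ∀ j, 0 ≤ Q j := fun j => by
    rw [← (hQ j).tsum_eq]; exact tsum_nonneg fun i => hq i.1
  have hcondC : ∀ j, Q j = 0 → P j = 0 := by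
    intro j hj
    have hq0 : ∀ i : {i // φ i = j}, q i.1 = 0 := by
      intro i
      have h1 := le_hasSum (hQ j) i fun k _ => hq k.1
      exact le_antisymm (hj ▸ h1) (hq i.1)
    have h0 : HasSum (fun i : {i // φ i = j} => p i.1) 0 := by
      convert (hasSum_zero : HasSum (fun _ : {i // φ i = j} => (0:ℝ)) 0) with i
      exact hcond _ (hq0 i)
    exact (hP j).unique h0
  set f : ι → ℝ := fun i => p i * Real.log (p i / q i) with hfdef
  set Sf : κ → ℝ := fun j => ∑' i : {i // φ i = j}, f i.1 with hSfdef
  have hsubf : ∀ j, Summable (fun i : {i // φ i = j} => f i.1) := fun j =>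
    hsum.comp_injective Subtype.coe_injective
  have hSfsum : HasSum Sf (∑' i, f i) :=
    HasSum.sigma (((Equiv.sigmaFiberEquiv φ).hasSum_iff).mpr hsum.hasSum)
      (fun j => (hsubf j).hasSum)
  have hPsum : HasSum P (∑' i, p i) :=
    HasSum.sigma (((Equiv.sigmaFiberEquiv φ).hasSum_iff).mpr hsp.hasSum) hP
  have hQsum : HasSum Q (∑' i, q i) :=
    HasSum.sigma (((Equiv.sigmaFiberEquiv φ).hasSum_iff).mpr hsq.hasSum) hQ
  set F : κ → ℝ := fun j => P j * Real.log (P j / Q j) with hFdef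
  have hlb : ∀ j, P j - Q j ≤ F j := fun j => key_ineq (hPnn j) (hQnn j) (hcondC j)
  have hub : ∀ j, F j ≤ Sf j := fun j =>
    log_sum (fun i : {i // φ i = j} => p i.1) (fun i => q i.1)
      (fun i => hp _) (fun i => hq _) (fun i => hcond _) (hP j) (hQ j) (hsubf j)
  have hFsummable : Summable F := by
    have h1 : Summable (fun j => Sf j - (P j - Q j)) :=
      hSfsum.summable.sub (hPsum.summable.sub hQsum.summable)
    have h2 : Summable (fun j => F j - (P j - Q j)) :=
      h1.of_nonneg_of_le (fun j => sub_nonneg.mpr (hlb j))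
        (fun j => sub_le_sub_right (hub j) _)
    have h3 := h2.add (hPsum.summable.sub hQsum.summable)
    have : (fun j => F j - (P j - Q j) + (P j - Q j)) = F := by funext j; ring
    rwa [this] at h3
  have hFle : (∑' j, F j) ≤ ∑' i, f i := by
    rw [← hSfsum.tsum_eq]
    exact Summable.tsum_le_tsum hub hFsummable hSfsum.summable
  simp only [klDiv]
  rw [if_pos ⟨hcondC, hFsummable⟩, if_pos ⟨hcond, hsum⟩]
  exact_mod_cast hFle

theorem hasSum_measure_toReal {Y : Type*} [MeasurableSpace Y] (μ : Measure Y)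
    [IsFiniteMeasure μ] {α : Type*} [Countable α] {s : α → Set Y}
    (hm : ∀ a, MeasurableSet (s a)) (hd : Pairwise (Function.onFun Disjoint s)) :
    HasSum (fun a => (μ (s a)).toReal) (μ (⋃ a, s a)).toReal := by
  have h1 : μ (⋃ a, s a) = ∑' a, μ (s a) := measure_iUnion hd hm
  have h2 : (∑' a, μ (s a)) ≠ ⊤ := by rw [← h1]; exact measure_ne_top μ _
  have h3 := ENNReal.summable_toReal h2
  refine h3.hasSum_iff.mpr ?_
  rw [h1, ENNReal.tsum_toReal_eq (fun a => measure_ne_top μ _)]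

/-- Let `μ, μ'` be two Borel probability measures on a metric space `Y`,
and let `(ζₙ)` be a sequence of countable Borel partitions of `Y` (here `ζ n y` denotes the
element of the `n`-th partition containing `y`) which are nested (`ζ m y ⊆ ζ n y` for
`m ≥ n`) and nicely shrinking with respect to `μ` (for `μ`-a.e. `y`, `diam (ζ n y) → 0`).
If `μ` is not absolutely continuous with respect to `μ'`, then the Kullback–Leibler
divergences `D_{ζₙ}(μ ∥ μ') = ∑_{A ∈ ζₙ} −μ(A) log(μ'(A)/μ(A))` tend to `∞`. -/
theorem stmt_6 {Y : Type*} [MetricSpace Y] [MeasurableSpace Y] [BorelSpace Y]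
    (μ μ' : Measure Y) [IsProbabilityMeasure μ] [IsProbabilityMeasure μ']
    (ζ : ℕ → Y → Set Y)
    (hmem : ∀ n y, y ∈ ζ n y)
    (hpart : ∀ n y y', y' ∈ ζ n y → ζ n y' = ζ n y)
    (hmeas : ∀ n y, MeasurableSet (ζ n y))
    (hcount : ∀ n, (Set.range (ζ n)).Countable)
    (hnested : ∀ m n, n ≤ m → ∀ y, ζ m y ⊆ ζ n y)
    (hshrink : ∀ᵐ y ∂μ, Tendsto (fun n => EMetric.diam (ζ n y)) atTop (nhds 0))
    (hsing : ¬ μ ≪ μ') :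
    Tendsto (fun n => klDiv (fun A : Set.range (ζ n) => (μ A.1).toReal)
        (fun A : Set.range (ζ n) => (μ' A.1).toReal)) atTop (nhds (⊤ : EReal)) := by
  classical
  have hdisj : ∀ n (A B : Set Y), A ∈ Set.range (ζ n) → B ∈ Set.range (ζ n) →
      A ≠ B → Disjoint A B := by
    rintro n A B ⟨y, rfl⟩ ⟨y', rfl⟩ hAB
    rw [Set.disjoint_left]
    intro z hz hz'
    exact hAB ((hpart n y z hz).symm.trans (hpart n y' z hz'))
  rw [EReal.tendsto_nhds_top_iff_real]
  intro M₀
  set M : ℝ := max M₀ 0 with hMdef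
  have hM0 : 0 ≤ M := le_max_right _ _
  obtain ⟨s₀, hs₀', hs₀⟩ : ∃ s, μ' s = 0 ∧ μ s ≠ 0 := by
    by_contra h
    push_neg at h
    exact hsing (Measure.AbsolutelyContinuous.mk fun s _ hs => h s hs)
  obtain ⟨S, hS₀sub, hSm, hS'⟩ := exists_measurable_superset_of_null hs₀'
  have hS : μ S ≠ 0 := fun h => hs₀ (measure_mono_null hS₀sub h)
  set aE := μ S with haEdef
  have haE_top : aE ≠ ⊤ := measure_ne_top μ S
  set a : ℝ := aE.toReal with hadef
  have ha : 0 < a := ENNReal.toReal_pos hS haE_top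
  set δ : ℝ := Real.exp (-(2 / a * (M + 3))) with hδdef
  have hδpos : 0 < δ := Real.exp_pos _
  have hδ1 : δ ≤ 1 := by
    rw [hδdef, Real.exp_le_one_iff]
    have : 0 ≤ 2 / a * (M + 3) := by positivity
    linarith
  have hlogδ : Real.log δ = -(2 / a * (M + 3)) := Real.log_exp _
  have hμ'S : μ' S < ENNReal.ofReal δ := by
    rw [hS']; exact ENNReal.ofReal_pos.mpr hδpos
  obtain ⟨U, hSU, hUopen, hU'⟩ := Set.exists_isOpen_lt_of_lt S _ hμ'S
  set E : ℕ → Set Y := fun n => {y | ζ n y ⊆ U} with hEdef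
  have hEU : ∀ n, E n ⊆ U := fun n y hy => hy (hmem n y)
  have hEmono : Monotone E := fun m n hmn y hy => (hnested n m hmn y).trans hy
  have hEeq : ∀ n, E n = ⋃ A : {A : Set.range (ζ n) // (A.1 : Set Y) ⊆ U}, (A.1.1 : Set Y) := by
    intro n
    ext y
    simp only [Set.mem_iUnion]
    constructor
    · intro hy
      exact ⟨⟨⟨ζ n y, ⟨y, rfl⟩⟩, hy⟩, hmem n y⟩
    · rintro ⟨⟨⟨A, y', rfl⟩, hAU⟩, hyA⟩
      show ζ n y ⊆ U
      rw [hpart n y' y hyA]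
      exact hAU
  have hcnt : ∀ n, Countable (Set.range (ζ n)) := fun n => (hcount n).to_subtype
  have hEmeas : ∀ n, MeasurableSet (E n) := by
    intro n
    haveI := hcnt n
    rw [hEeq n]
    refine MeasurableSet.iUnion ?_
    rintro ⟨⟨A, y', rfl⟩, hAU⟩
    exact hmeas n y'
  have hae : ∀ᵐ y ∂μ, y ∈ S → y ∈ ⋃ n, E n := by
    filter_upwards [hshrink] with y hy hyS
    have hyU : y ∈ U := hSU hyS
    obtain ⟨ε, hε, hball⟩ := EMetric.isOpen_iff.mp hUopen y hyU
    have hev : ∀ᶠ n in atTop, EMetric.diam (ζ n y) < ε := by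
      exact hy.eventually (eventually_lt_nhds hε)
    obtain ⟨n, hn⟩ := hev.exists
    refine Set.mem_iUnion.mpr ⟨n, fun z hz => hball ?_⟩
    exact lt_of_le_of_lt (EMetric.edist_le_diam_of_mem hz (hmem n y)) hn
  have hmeasU : aE ≤ μ (⋃ n, E n) := by
    refine measure_mono_ae ?_
    exact hae
  have hhalf : aE / 2 < μ (⋃ n, E n) :=
    lt_of_lt_of_le (ENNReal.half_lt_self hS haE_top) hmeasU
  have htend : Tendsto (fun n => μ (E n)) atTop (nhds (μ (⋃ n, E n))) :=
    tendsto_measure_iUnion_atTop hEmono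
  have hev : ∀ᶠ n in atTop, aE / 2 < μ (E n) :=
    htend.eventually (lt_mem_nhds hhalf)
  filter_upwards [hev] with n hn
  haveI := hcnt n
  set p : Set.range (ζ n) → ℝ := fun A => (μ A.1).toReal with hpdef
  set q : Set.range (ζ n) → ℝ := fun A => (μ' A.1).toReal with hqdef
  have hmeasA : ∀ A : Set.range (ζ n), MeasurableSet (A.1 : Set Y) := by
    rintro ⟨A, y, rfl⟩; exact hmeas n y
  have hdisjA : Pairwise (Function.onFun Disjoint (fun A : Set.range (ζ n) => (A.1 : Set Y))) := by
    intro A B hAB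
    exact hdisj n A.1 B.1 A.2 B.2 (fun h => hAB (Subtype.ext h))
  have hUnivEq : (⋃ A : Set.range (ζ n), (A.1 : Set Y)) = Set.univ := by
    ext y
    simp only [Set.mem_iUnion, Set.mem_univ, iff_true]
    exact ⟨⟨ζ n y, ⟨y, rfl⟩⟩, hmem n y⟩
  have hsp : HasSum p 1 := by
    have := hasSum_measure_toReal μ (s := fun A : Set.range (ζ n) => (A.1 : Set Y))
      hmeasA hdisjA
    rwa [hUnivEq, measure_univ, ENNReal.toReal_one] at this
  have hsq : HasSum q 1 := by
    have := hasSum_measure_toReal μ' (s := fun A : Set.range (ζ n) => (A.1 : Set Y))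
      hmeasA hdisjA
    rwa [hUnivEq, measure_univ, ENNReal.toReal_one] at this
  set φ : Set.range (ζ n) → Bool := fun A => decide ((A.1 : Set Y) ⊆ U) with hφdef
  set P : Bool → ℝ := fun b => (μ (if b then E n else (E n)ᶜ)).toReal with hPdef
  set Q : Bool → ℝ := fun b => (μ' (if b then E n else (E n)ᶜ)).toReal with hQdef
  have hfib : ∀ j : Bool, (⋃ A : {A : Set.range (ζ n) // φ A = j}, (A.1.1 : Set Y))
      = (if j then E n else (E n)ᶜ) := by
    intro j
    ext y
    simp only [Set.mem_iUnion]
    constructor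
    · rintro ⟨⟨⟨A, y', rfl⟩, hA⟩, hyA⟩
      have hy' : ζ n y = ζ n y' := hpart n y' y hyA
      cases j with
      | true =>
        simp only [if_true]
        have : (ζ n y' : Set Y) ⊆ U := by simpa [hφdef] using hA
        show ζ n y ⊆ U
        rw [hy']; exact this
      | false =>
        simp only [Bool.false_eq_true, if_false, Set.mem_compl_iff]
        have : ¬ (ζ n y' : Set Y) ⊆ U := by simpa [hφdef] using hA
        intro hc
        exact this (hy' ▸ hc)
    · intro hy
      cases j with
      | true =>
        simp only [if_true] at hy
        exact ⟨⟨⟨ζ n y, ⟨y, rfl⟩⟩, by simp only [hφdef, decide_eq_true_eq]; exact hy⟩, hmem n y⟩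
      | false =>
        simp only [Bool.false_eq_true, if_false, Set.mem_compl_iff] at hy
        exact ⟨⟨⟨ζ n y, ⟨y, rfl⟩⟩, by simp only [hφdef, decide_eq_false_iff_not]; exact hy⟩, hmem n y⟩
  have hP : ∀ j, HasSum (fun A : {A : Set.range (ζ n) // φ A = j} => p A.1) (P j) := by
    intro j
    have := hasSum_measure_toReal μ
      (s := fun A : {A : Set.range (ζ n) // φ A = j} => (A.1.1 : Set Y))
      (fun A => hmeasA A.1)
      (fun A B hAB => hdisjA (fun h => hAB (Subtype.ext h)))
    rwa [hfib j] at this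
  have hQ : ∀ j, HasSum (fun A : {A : Set.range (ζ n) // φ A = j} => q A.1) (Q j) := by
    intro j
    have := hasSum_measure_toReal μ'
      (s := fun A : {A : Set.range (ζ n) // φ A = j} => (A.1.1 : Set Y))
      (fun A => hmeasA A.1)
      (fun A B hAB => hdisjA (fun h => hAB (Subtype.ext h)))
    rwa [hfib j] at this
  have hmain : klDiv P Q ≤ klDiv p q :=
    klDiv_le_klDiv φ p q (fun A => ENNReal.toReal_nonneg) (fun A => ENNReal.toReal_nonneg)
      hsp.summable hsq.summable P Q hP hQ
  have hM01 : ((M₀ : ℝ) : EReal) ≤ ((M : ℝ) : EReal) := EReal.coe_le_coe_iff.mpr (le_max_left _ _)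
  refine lt_of_le_of_lt hM01 (lt_of_lt_of_le ?_ hmain)
  -- now show (M : EReal) < klDiv P Q
  have hPt : a / 2 < P true := by
    have h1 : (aE / 2).toReal < (μ (E n)).toReal := by
      refine (ENNReal.toReal_lt_toReal ?_ ?_).mpr hn
      · exact (ENNReal.div_lt_top haE_top (by norm_num)).ne
      · exact measure_ne_top μ _
    have h2 : (aE / 2).toReal = a / 2 := by
      rw [ENNReal.toReal_div]; norm_num; rfl
    rw [h2] at h1
    simpa [hPdef] using h1
  have hPt1 : P true ≤ 1 := by
    simp only [hPdef, if_true]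
    have : μ (E n) ≤ 1 := prob_le_one
    calc (μ (E n)).toReal ≤ (1 : ℝ≥0∞).toReal :=
          ENNReal.toReal_mono (by norm_num) this
      _ = 1 := ENNReal.toReal_one
  have hQt : Q true < δ := by
    simp only [hQdef, if_true]
    have h1 : μ' (E n) ≤ μ' U := measure_mono (hEU n)
    have h2 : (μ' (E n)).toReal ≤ (μ' U).toReal :=
      ENNReal.toReal_mono (measure_ne_top μ' _) h1
    have h3 : (μ' U).toReal < δ := by
      rw [← ENNReal.lt_ofReal_iff_toReal_lt (measure_ne_top μ' _)]
      exact hU'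
    linarith
  have hQnn : ∀ b, 0 ≤ Q b := fun b => ENNReal.toReal_nonneg
  have hPnn : ∀ b, 0 ≤ P b := fun b => ENNReal.toReal_nonneg
  have hQf1 : Q false ≤ 1 := by
    simp only [hQdef, if_false]
    calc (μ' (E n)ᶜ).toReal ≤ (1 : ℝ≥0∞).toReal :=
          ENNReal.toReal_mono (by norm_num) prob_le_one
      _ = 1 := ENNReal.toReal_one
  by_cases hc : (∀ b, Q b = 0 → P b = 0) ∧ Summable (fun b => P b * Real.log (P b / Q b))
  · simp only [klDiv]
    rw [if_pos hc]
    rw [show (∑' b, P b * Real.log (P b / Q b))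
        = P false * Real.log (P false / Q false) + P true * Real.log (P true / Q true)
      from tsum_bool _]
    rw [EReal.coe_lt_coe_iff]
    have hQtpos : 0 < Q true := by
      rcases eq_or_lt_of_le (hQnn true) with h | h
      · exact absurd (hc.1 true h.symm) (by intro hh; rw [hh] at hPt; linarith)
      · exact h
    have hPtpos : 0 < P true := lt_trans (by linarith) hPt
    have hftrue : P true * Real.log (P true / Q true)
        = P true * Real.log (P true) - P true * Real.log (Q true) := by
      rw [Real.log_div (ne_of_gt hPtpos) (ne_of_gt hQtpos), mul_sub]
    have h1 : P true - 1 ≤ P true * Real.log (P true) := by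
      have := key_ineq (le_of_lt hPtpos) zero_le_one (fun h => absurd h one_ne_zero)
      simpa using this
    have h2 : Real.log (Q true) ≤ Real.log δ :=
      Real.log_le_log hQtpos (le_of_lt hQt)
    have hlogδneg : Real.log δ ≤ 0 := Real.log_nonpos hδpos.le hδ1
    have h3 : (a / 2) * (- Real.log δ) ≤ P true * (- Real.log (Q true)) := by
      have hnl : 0 ≤ - Real.log δ := by linarith
      have hnl2 : - Real.log δ ≤ - Real.log (Q true) := by linarith
      exact mul_le_mul hPt.le hnl2 hnl (by linarith)
    have h4 : (a / 2) * (- Real.log δ) = M + 3 := by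
      rw [hlogδ]
      field_simp
    have h5 : P false - Q false ≤ P false * Real.log (P false / Q false) :=
      key_ineq (hPnn false) (hQnn false) (hc.1 false)
    nlinarith [hPnn false, hQnn false, hQf1, h1, h3, h4, h5, hPt, ha]
  · simp only [klDiv]
    rw [if_neg hc]
    exact EReal.coe_lt_top M
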